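/- Let P be a monic real quintic with sign pattern (+,-,-,-,-,+) (all coefficients nonzero). Then P cannot have exactly 0 positive roots and exactly 3 negative roots counted with multiplicity. -/

import Mathlib

open Polynomial

/-- Number of positive real roots counted with multiplicity. -/
noncomputable def posRoots (p : Polynomial ℝ) : ℕ :=
  (p.roots.filter (fun x => 0 < x)).card

/-- Number of negative real roots counted with multiplicity. -/
noncomputable def negRoots (p : Polynomial ℝ) : ℕ :=
  (p.roots.filter (fun x => x < 0)).card

private lemma quad_form (q : Polynomial ℝ) (hm : q.Monic) (h2 : q.natDegree = 2) :
    q = X ^ 2 + C (q.coeff 1) * X + C (q.coeff 0) := by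
  have hc2 : q.coeff 2 = 1 := by
    have := hm.leadingCoeff
    rwa [leadingCoeff, h2] at this
  ext n
  rcases n with _ | _ | _ | n
  · simp [coeff_X_pow, coeff_C]
  · simp [coeff_X_pow, coeff_C]
  · simp [coeff_X_pow, coeff_C, hc2]
  · have hlt : q.natDegree < n + 3 := by omega
    rw [coeff_eq_zero_of_natDegree_lt hlt]
    simp [coeff_X_pow, coeff_C]

private lemma key_ineq (a b c u v : ℝ) (ha : 0 < a) (hb : 0 < b) (hc : 0 < c)
    (H1 : u + (a + b + c) < 0)
    (H4 : u * (a * b * c) + v * (a * b + a * c + b * c) < 0)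
    (H5 : u ^ 2 - 4 * v < 0) : False := by
  have he2 : 0 < a * b + a * c + b * c := by positivity
  have hw : 0 < -u := by nlinarith
  have hN : 0 ≤ (a + b + c) * (a * b + a * c + b * c) - 9 * (a * b * c) := by
    nlinarith [mul_nonneg hc.le (sq_nonneg (a - b)), mul_nonneg ha.le (sq_nonneg (b - c)),
      mul_nonneg hb.le (sq_nonneg (a - c))]
  nlinarith [mul_nonneg hw.le hN, mul_pos he2 (show 0 < 4 * v - u ^ 2 by linarith),
    mul_pos (mul_pos hw he2) (show 0 < -u - (a + b + c) by linarith)]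

theorem quintic_nonrealizable (p : Polynomial ℝ)
    (hm : p.Monic) (hd : p.natDegree = 5)
    (h4 : p.coeff 4 < 0) (h3 : p.coeff 3 < 0) (h2 : p.coeff 2 < 0)
    (h1 : p.coeff 1 < 0) (h0 : 0 < p.coeff 0) :
    ¬ (posRoots p = 0 ∧ negRoots p = 3) := by
  rintro ⟨hpos, hneg⟩
  have hp0 : p ≠ 0 := hm.ne_zero
  have hzero : ∀ x ∈ p.roots, x ≠ 0 := by
    intro x hx hx0
    have := isRoot_of_mem_roots hx
    rw [hx0] at this
    rw [IsRoot, ← coeff_zero_eq_eval_zero] at this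
    linarith
  -- every root is negative
  have hallneg : ∀ x ∈ p.roots, x < 0 := by
    intro x hx
    rcases lt_trichotomy x 0 with h | h | h
    · exact h
    · exact absurd h (hzero x hx)
    · exfalso
      have hmem : x ∈ p.roots.filter (fun x => 0 < x) := Multiset.mem_filter.2 ⟨hx, h⟩
      have : p.roots.filter (fun x => 0 < x) = 0 := Multiset.card_eq_zero.1 hpos
      rw [this] at hmem
      exact Multiset.notMem_zero x hmem
  have hfilt : p.roots.filter (fun x => x < 0) = p.roots :=
    Multiset.filter_eq_self.2 hallneg
  have hcard : Multiset.card p.roots = 3 := by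
    rw [negRoots, hfilt] at hneg; exact hneg
  obtain ⟨r1, r2, r3, hs⟩ := Multiset.card_eq_three.1 hcard
  have hr1 : r1 < 0 := hallneg r1 (by rw [hs]; simp)
  have hr2 : r2 < 0 := hallneg r2 (by rw [hs]; simp)
  have hr3 : r3 < 0 := hallneg r3 (by rw [hs]; simp)
  obtain ⟨q, hq⟩ := p.prod_multiset_X_sub_C_dvd
  have hmonicprod : ((p.roots.map fun a => X - C a).prod).Monic := monic_multisetProd_X_sub_C _
  have hqmonic : q.Monic := hmonicprod.of_mul_monic_left (hq ▸ hm)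
  have hq0 : q ≠ 0 := hqmonic.ne_zero
  have hdegprod : ((p.roots.map fun a => X - C a).prod).natDegree = 3 := by
    rw [natDegree_multiset_prod_X_sub_C_eq_card, hcard]
  have hqdeg : q.natDegree = 2 := by
    have := natDegree_mul (hmonicprod.ne_zero) hq0
    rw [← hq, hd, hdegprod] at this
    omega
  have hqroots : q.roots = 0 := by
    have hmul : ((p.roots.map fun a => X - C a).prod * q).roots
        = ((p.roots.map fun a => X - C a).prod).roots + q.roots :=
      roots_mul (hq ▸ hp0)
    rw [← hq, roots_multiset_prod_X_sub_C] at hmul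
    have hcc := congrArg Multiset.card hmul
    rw [Multiset.card_add] at hcc
    exact Multiset.card_eq_zero.1 (by omega)
  have hqnoroot : ∀ x : ℝ, q.eval x ≠ 0 := by
    intro x hx
    have : x ∈ q.roots := by rw [mem_roots hq0]; exact hx
    rw [hqroots] at this
    exact Multiset.notMem_zero x this
  set u := q.coeff 1 with hu
  set v := q.coeff 0 with hv
  have hqform : q = X ^ 2 + C u * X + C v := quad_form q hqmonic hqdeg
  -- discriminant is negative
  have hdisc : u ^ 2 - 4 * v < 0 := by
    by_contra hcon
    push_neg at hcon
    set s := Real.sqrt (u ^ 2 - 4 * v) with hsdef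
    have hs2 : s ^ 2 = u ^ 2 - 4 * v := Real.sq_sqrt hcon
    have : q.eval ((-u + s) / 2) = 0 := by
      rw [hqform]
      simp only [eval_add, eval_mul, eval_pow, eval_X, eval_C]
      nlinarith [hs2]
    exact hqnoroot _ this
  -- factorization of p
  have hprod : (p.roots.map fun a => X - C a).prod
      = (X - C r1) * (X - C r2) * (X - C r3) := by
    rw [hs]
    simp [Multiset.map_cons, Multiset.prod_cons, mul_assoc]
  have hfact : p = (X - C r1) * (X - C r2) * (X - C r3) * (X ^ 2 + C u * X + C v) := by
    rw [hq, hprod, hqform]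
  have hexp : p = X ^ 5 + C (u - (r1 + r2 + r3)) * X ^ 4
      + C (v - u * (r1 + r2 + r3) + (r1 * r2 + r1 * r3 + r2 * r3)) * X ^ 3
      + C (-(r1 * r2 * r3) + u * (r1 * r2 + r1 * r3 + r2 * r3) - v * (r1 + r2 + r3)) * X ^ 2
      + C (-(u * (r1 * r2 * r3)) + v * (r1 * r2 + r1 * r3 + r2 * r3)) * X
      + C (-(v * (r1 * r2 * r3))) := by
    rw [hfact]
    simp only [map_add, map_sub, map_mul, map_neg]
    ring
  have hc4 : p.coeff 4 = u - (r1 + r2 + r3) := by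
    rw [hexp]
    simp only [coeff_add, coeff_C_mul, coeff_X_pow, coeff_X, coeff_C]
    norm_num
  have hc1 : p.coeff 1 = -(u * (r1 * r2 * r3)) + v * (r1 * r2 + r1 * r3 + r2 * r3) := by
    rw [hexp]
    simp only [coeff_add, coeff_C_mul, coeff_X_pow, coeff_X, coeff_C]
    norm_num
  rw [hc4] at h4
  rw [hc1] at h1
  exact key_ineq (-r1) (-r2) (-r3) u v (by linarith) (by linarith) (by linarith)
    (by linarith) (by nlinarith [h1]) hdisc
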